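/- arXiv:1108.5439 — 3 statements merged into one kernel-verified Lean document; each statement's English description precedes it below -/
import Mathlib

section
/- Let R > 0, let f and g be complex-valued functions analytic on the closed ball of radius R centered at 0 in ℂ, let 0 < r < R, and let n ≥ 1 be a natural number. Then (1/(2πi)) ∮_{|z| = r} z^{-n} f^{(n-1)}(z) g(z) dz = (1/(n-1)!) ∑_{m + s = n - 1} C(n-1, m) f^{(n-1+m)}(0) g^{(s)}(0), where the sum is over pairs of natural numbers (m, s) with m + s = n - 1, f^{(k)} denotes the k-th iterated complex derivative, and C(n-1, m) is the binomial coefficient. (This is the residue computation underlying the variation formula for period matrices under Schiffer variation, Lemma 3.1 of the paper.) -/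
open Metric Finset

private lemma analyticOnNhd_iteratedDeriv {f : ℂ → ℂ} {s : Set ℂ}
    (hf : AnalyticOnNhd ℂ f s) (n : ℕ) : AnalyticOnNhd ℂ (iteratedDeriv n f) s := by
  induction n with
  | zero => simpa [iteratedDeriv_zero] using hf
  | succ n ih => rw [iteratedDeriv_succ]; exact ih.deriv

private lemma iteratedDeriv_comp_iteratedDeriv (f : ℂ → ℂ) (k m : ℕ) :
    iteratedDeriv m (iteratedDeriv k f) = iteratedDeriv (k + m) f := by
  simp only [iteratedDeriv_eq_iterate]
  rw [add_comm, Function.iterate_add_apply]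

private lemma hasDerivAt_iteratedDeriv {f : ℂ → ℂ} {s : Set ℂ}
    (hf : AnalyticOnNhd ℂ f s) (i : ℕ) {x : ℂ} (hx : x ∈ s) :
    HasDerivAt (iteratedDeriv i f) (iteratedDeriv (i + 1) f x) x := by
  have h := (analyticOnNhd_iteratedDeriv hf i x hx).differentiableAt.hasDerivAt
  rw [iteratedDeriv_succ]
  exact h

private lemma leibniz_iteratedDeriv {s : Set ℂ} (hs : IsOpen s) {f g : ℂ → ℂ}
    (hf : AnalyticOnNhd ℂ f s) (hg : AnalyticOnNhd ℂ g s) (k : ℕ) :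
    ∀ x ∈ s, iteratedDeriv k (fun z => f z * g z) x =
      ∑ ij ∈ antidiagonal k,
        (k.choose ij.1 : ℂ) * iteratedDeriv ij.1 f x * iteratedDeriv ij.2 g x := by
  induction k with
  | zero => intro x hx; simp
  | succ k ih =>
    intro x hx
    rw [iteratedDeriv_succ]
    have heq : deriv (iteratedDeriv k (fun z => f z * g z)) x =
        deriv (fun y => ∑ ij ∈ antidiagonal k,
          (k.choose ij.1 : ℂ) * iteratedDeriv ij.1 f y * iteratedDeriv ij.2 g y) x := by
      apply Filter.EventuallyEq.deriv_eq
      filter_upwards [hs.mem_nhds hx] with y hy using ih y hy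
    rw [heq]
    have hterm : HasDerivAt (fun y => ∑ ij ∈ antidiagonal k,
          (k.choose ij.1 : ℂ) * iteratedDeriv ij.1 f y * iteratedDeriv ij.2 g y)
        (∑ ij ∈ antidiagonal k,
          ((k.choose ij.1 : ℂ) * iteratedDeriv (ij.1 + 1) f x * iteratedDeriv ij.2 g x +
           (k.choose ij.1 : ℂ) * iteratedDeriv ij.1 f x * iteratedDeriv (ij.2 + 1) g x)) x := by
      apply HasDerivAt.fun_sum
      intro ij _
      have h1 := hasDerivAt_iteratedDeriv hf ij.1 hx
      have h2 := hasDerivAt_iteratedDeriv hg ij.2 hx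
      exact ((h1.const_mul ((k.choose ij.1 : ℂ))).mul h2).congr_deriv (by ring)
    rw [hterm.deriv, Finset.sum_add_distrib]
    simp only [mul_assoc]
    rw [sum_antidiagonal_choose_succ_mul
      (fun i j => iteratedDeriv i f x * iteratedDeriv j g x) k]
    rw [add_comm]
    congr 1
    refine Finset.sum_congr rfl fun ij hij => ?_
    rw [k.choose_symm_of_eq_add (Finset.HasAntidiagonal.mem_antidiagonal.1 hij).symm]

/-- The residue computation underlying the variation formula for period matrices
under Schiffer variation (Lemma 3.1 of the paper):
(1/(2πi)) ∮_{|z|=r} z^{-n} f^{(n-1)}(z) g(z) dz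
  = (1/(n-1)!) ∑_{m+s=n-1} C(n-1,m) f^{(n-1+m)}(0) g^{(s)}(0). -/
theorem schiffer_residue_formula (R r : ℝ) (f g : ℂ → ℂ) (n : ℕ)
    (hR : 0 < R)
    (hf : ∀ z ∈ closedBall (0 : ℂ) R, AnalyticAt ℂ f z)
    (hg : ∀ z ∈ closedBall (0 : ℂ) R, AnalyticAt ℂ g z)
    (hr : 0 < r) (hrR : r < R) (hn : 1 ≤ n) :
    (2 * Real.pi * Complex.I)⁻¹ *
        (∮ z in C(0, r), z ^ (-(n : ℤ)) * iteratedDeriv (n - 1) f z * g z) =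
      (((n - 1).factorial : ℂ))⁻¹ *
        ∑ p ∈ Finset.HasAntidiagonal.antidiagonal (n - 1),
          ((n - 1).choose p.1 : ℂ) * iteratedDeriv (n - 1 + p.1) f 0 *
            iteratedDeriv p.2 g 0 := by
  set k := n - 1 with hk
  have hnk : n = k + 1 := (Nat.succ_pred_eq_of_pos hn).symm
  have hf' : AnalyticOnNhd ℂ f (ball (0 : ℂ) R) :=
    fun z hz => hf z (ball_subset_closedBall hz)
  have hg' : AnalyticOnNhd ℂ g (ball (0 : ℂ) R) :=
    fun z hz => hg z (ball_subset_closedBall hz)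
  set F : ℂ → ℂ := fun z => iteratedDeriv k f z * g z with hF
  have hFan : AnalyticOnNhd ℂ F (ball (0 : ℂ) R) :=
    (analyticOnNhd_iteratedDeriv hf' k).mul hg'
  -- power series of F on ball of radius r
  have hsub : closedBall (0 : ℂ) r ⊆ ball (0 : ℂ) R :=
    closedBall_subset_ball hrR
  have hd : DifferentiableOn ℂ F (closedBall (0 : ℂ) (r.toNNReal)) := by
    intro z hz
    rw [Real.coe_toNNReal r hr.le] at hz
    exact (hFan z (hsub hz)).differentiableAt.differentiableWithinAt
  have hr' : 0 < r.toNNReal := by simpa using hr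
  have hball := hd.hasFPowerSeriesOnBall hr'
  -- coefficient formula
  have hcoeff := hball.factorial_smul (y := (1 : ℂ)) k
  rw [cauchyPowerSeries_apply] at hcoeff
  have hint : (∮ z in C(0, (r.toNNReal : ℝ)), ((1 : ℂ) / (z - 0)) ^ k • (z - 0)⁻¹ • F z) =
      ∮ z in C(0, r), z ^ (-(n : ℤ)) * iteratedDeriv k f z * g z := by
    rw [Real.coe_toNNReal r hr.le]
    refine circleIntegral.integral_congr hr.le fun z hz => ?_
    have hz0 : z ≠ 0 := by
      intro h
      rw [h] at hz
      simp [abs_of_pos hr, hr.ne'] at hz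
      exact hr.ne' hz.symm
    simp only [sub_zero, smul_eq_mul, one_div]
    rw [hnk]
    rw [zpow_neg, zpow_natCast, pow_succ, mul_inv]
    field_simp [hF]
    rw [one_div, inv_pow, mul_comm, ← mul_assoc, mul_inv_cancel₀ (pow_ne_zero k hz0), one_mul]
  rw [hint] at hcoeff
  -- Leibniz at 0
  have h0 : (0 : ℂ) ∈ ball (0 : ℂ) R := by simpa using hR
  have hleib := leibniz_iteratedDeriv isOpen_ball
    (analyticOnNhd_iteratedDeriv hf' k) hg' k 0 h0
  have hFval : iteratedDeriv k F 0 =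
      ∑ p ∈ Finset.HasAntidiagonal.antidiagonal k,
        (k.choose p.1 : ℂ) * iteratedDeriv (k + p.1) f 0 * iteratedDeriv p.2 g 0 := by
    rw [hF, hleib]
    refine Finset.sum_congr rfl fun p _ => ?_
    rw [iteratedDeriv_comp_iteratedDeriv f k p.1]
  -- assemble
  have hfac : ((k.factorial : ℂ)) ≠ 0 := Nat.cast_ne_zero.2 k.factorial_ne_zero
  rw [← iteratedDeriv_eq_iteratedFDeriv, nsmul_eq_mul, smul_eq_mul] at hcoeff
  rw [← hFval, ← hcoeff, ← mul_assoc, inv_mul_cancel₀ hfac, one_mul]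
end

section
/- Let R > 0, let f and g be complex-valued functions analytic on the closed ball of radius R centered at 0 in ℂ, let 0 < r < R, and let ε ∈ ℂ with |ε| < r(R - r). Then (1/(2πi)) ∮_{|z| = r} (∑_{n=1}^∞ (ε^n / (n! z^n)) f^{(n-1)}(z)) g(z) dz = ∑_{n=1}^∞ (ε^n / (n! (n-1)!)) ∑_{m + s = n - 1} C(n-1, m) f^{(n-1+m)}(0) g^{(s)}(0), and both the integrand series and the right-hand double series converge. (This is the full exact variation formula for the entries of the period matrix under Schiffer variation, Lemma 3.1 of the paper, expressed as a statement about analytic functions: the left side is the correction term π_{ij}(Γ*_ε) − π_{ij}(Γ) and the right side is its complete Taylor expansion in ε.) -/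
set_option maxHeartbeats 1000000


open Metric

lemma SVF_leibniz {u v : ℂ → ℂ} {s : Set ℂ} (hs : IsOpen s)
    (hu : AnalyticOnNhd ℂ u s) (hv : AnalyticOnNhd ℂ v s) (n : ℕ) :
    ∀ x ∈ s, iteratedDeriv n (fun z => u z * v z) x =
      ∑ p ∈ Finset.HasAntidiagonal.antidiagonal n,
        (n.choose p.1 : ℂ) * iteratedDeriv p.1 u x * iteratedDeriv p.2 v x := by
  have hiu : ∀ k, AnalyticOnNhd ℂ (iteratedDeriv k u) s := fun k => by
    rw [iteratedDeriv_eq_iterate]; exact hu.iterated_deriv k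
  have hiv : ∀ k, AnalyticOnNhd ℂ (iteratedDeriv k v) s := fun k => by
    rw [iteratedDeriv_eq_iterate]; exact hv.iterated_deriv k
  induction n with
  | zero => intro x hx; simp
  | succ n ih =>
    intro x hx
    rw [iteratedDeriv_succ]
    have hev : iteratedDeriv n (fun z => u z * v z) =ᶠ[nhds x]
        (fun y => ∑ p ∈ Finset.HasAntidiagonal.antidiagonal n,
          (n.choose p.1 : ℂ) * iteratedDeriv p.1 u y * iteratedDeriv p.2 v y) := by
      filter_upwards [hs.mem_nhds hx] with y hy using ih y hy
    rw [hev.deriv_eq]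
    rw [deriv_fun_sum (fun p hp => (((hiu p.1 x hx).differentiableAt.const_mul
      ((n.choose p.1 : ℂ))).mul (hiv p.2 x hx).differentiableAt))]
    have hterm : ∀ p ∈ Finset.HasAntidiagonal.antidiagonal n,
        deriv (fun y => (n.choose p.1 : ℂ) * iteratedDeriv p.1 u y * iteratedDeriv p.2 v y) x =
          (n.choose p.1 : ℂ) * iteratedDeriv (p.1 + 1) u x * iteratedDeriv p.2 v x +
          (n.choose p.1 : ℂ) * iteratedDeriv p.1 u x * iteratedDeriv (p.2 + 1) v x := by
      intro p hp
      rw [deriv_fun_mul (((hiu p.1 x hx).differentiableAt.const_mul _))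
        (hiv p.2 x hx).differentiableAt, deriv_const_mul _ (hiu p.1 x hx).differentiableAt,
        ← iteratedDeriv_succ, ← iteratedDeriv_succ]
    rw [Finset.sum_congr rfl hterm, Finset.sum_add_distrib]
    have key := Finset.sum_antidiagonal_choose_succ_mul
      (fun i j => iteratedDeriv i u x * iteratedDeriv j v x) n
    have key2 : ∑ p ∈ Finset.HasAntidiagonal.antidiagonal (n+1),
        ((n+1).choose p.1 : ℂ) * iteratedDeriv p.1 u x * iteratedDeriv p.2 v x =
        ∑ ij ∈ Finset.HasAntidiagonal.antidiagonal n, (n.choose ij.1 : ℂ) *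
          (iteratedDeriv ij.1 u x * iteratedDeriv (ij.2 + 1) v x) +
        ∑ ij ∈ Finset.HasAntidiagonal.antidiagonal n, (n.choose ij.2 : ℂ) *
          (iteratedDeriv (ij.1 + 1) u x * iteratedDeriv ij.2 v x) := by
      rw [← key]; exact Finset.sum_congr rfl fun p _ => by ring
    rw [key2, add_comm]
    congr 1
    · exact Finset.sum_congr rfl fun p _ => by ring
    · refine Finset.sum_congr rfl fun p hp => ?_
      rw [Finset.HasAntidiagonal.mem_antidiagonal] at hp
      have h3 : n.choose p.2 = n.choose p.1 :=
        Nat.choose_symm_of_eq_add (by omega)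
      rw [h3]; ring

lemma SVF_cauchy (h : ℂ → ℂ) {r : ℝ} (hr : 0 < r)
    (hd : DifferentiableOn ℂ h (closedBall (0:ℂ) r)) (n : ℕ) :
    (∮ z in C(0, r), z⁻¹ ^ n • z⁻¹ • h z) =
      (2 * Real.pi * Complex.I) * (iteratedDeriv n h 0 / (n.factorial : ℂ)) := by
  lift r to NNReal using hr.le with r'
  have hr' : 0 < r' := by exact_mod_cast hr
  have hp : HasFPowerSeriesOnBall h (cauchyPowerSeries h 0 r') 0 r' :=
    hd.hasFPowerSeriesOnBall hr'
  have h1 := hp.factorial_smul (1 : ℂ) n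
  rw [← iteratedDeriv_eq_iteratedFDeriv] at h1
  have h2 := cauchyPowerSeries_apply h 0 r' n 1
  simp only [sub_zero, one_div] at h2
  rw [← h1, nsmul_eq_mul, h2]
  have hπ : (2 * (Real.pi : ℂ) * Complex.I) ≠ 0 := Complex.two_pi_I_ne_zero
  rw [smul_eq_mul]
  have hfac : (n.factorial : ℂ) ≠ 0 := by exact_mod_cast n.factorial_ne_zero
  rw [mul_comm (n.factorial : ℂ), mul_div_assoc, div_self hfac, mul_one, ← mul_assoc,
    mul_inv_cancel₀ hπ, one_mul]

lemma SVF_estimate {h : ℂ → ℂ} {c : ℂ} {ρ : ℝ} (hρ : 0 < ρ)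
    (hd : DifferentiableOn ℂ h (closedBall c ρ)) {M : ℝ}
    (hM : ∀ z ∈ sphere c ρ, ‖h z‖ ≤ M) (n : ℕ) :
    ‖iteratedDeriv n h c‖ ≤ n.factorial * M * ρ⁻¹ ^ n := by
  lift ρ to NNReal using hρ.le with ρ'
  have hρ' : 0 < ρ' := by exact_mod_cast hρ
  have hp : HasFPowerSeriesOnBall h (cauchyPowerSeries h c ρ') c ρ' :=
    hd.hasFPowerSeriesOnBall hρ'
  have h1 := hp.factorial_smul (1 : ℂ) n
  rw [← iteratedDeriv_eq_iteratedFDeriv] at h1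
  have hsub : ∀ θ : ℝ, circleMap c ρ' θ ∈ sphere c (ρ' : ℝ) := fun θ =>
    circleMap_mem_sphere c hρ.le θ
  have hcont : Continuous fun θ : ℝ => ‖h (circleMap c ρ' θ)‖ := by
    refine Continuous.norm ?_
    exact hd.continuousOn.comp_continuous (continuous_circleMap c ρ')
      (fun θ => sphere_subset_closedBall (hsub θ))
  have hint : (∫ θ : ℝ in (0)..2 * Real.pi, ‖h (circleMap c ρ' θ)‖) ≤ 2 * Real.pi * M := by
    have := intervalIntegral.integral_mono_on (a := 0) (b := 2 * Real.pi)
      Real.two_pi_pos.le (hcont.intervalIntegrable _ _)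
      (intervalIntegrable_const : IntervalIntegrable (fun _ => M) MeasureTheory.volume 0 (2*Real.pi))
      (fun θ _ => hM _ (hsub θ))
    simpa using this
  have hM0 : 0 ≤ M := le_trans (norm_nonneg _) (hM (c + ρ') (by
    simp [mem_sphere_iff_norm, hρ.le]))
  calc ‖iteratedDeriv n h c‖ = ‖(n.factorial : ℕ) • (cauchyPowerSeries h c ρ' n fun _ => 1)‖ := by
        rw [h1]
    _ = n.factorial * ‖cauchyPowerSeries h c ρ' n fun _ => 1‖ := by
        rw [← Nat.cast_smul_eq_nsmul ℂ, norm_smul, Complex.norm_natCast]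
    _ ≤ n.factorial * ‖cauchyPowerSeries h c ρ' n‖ := by
        gcongr
        calc ‖cauchyPowerSeries h c ρ' n fun _ => 1‖
            ≤ ‖cauchyPowerSeries h c ρ' n‖ * ∏ _i : Fin n, ‖(1:ℂ)‖ :=
              ContinuousMultilinearMap.le_opNorm _ _
          _ = ‖cauchyPowerSeries h c ρ' n‖ := by simp
    _ ≤ n.factorial * (((2 * Real.pi)⁻¹ * ∫ θ : ℝ in (0)..2 * Real.pi,
          ‖h (circleMap c ρ' θ)‖) * |(ρ' : ℝ)|⁻¹ ^ n) := by
        gcongr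
        exact norm_cauchyPowerSeries_le h c ρ' n
    _ ≤ n.factorial * (M * (ρ' : ℝ)⁻¹ ^ n) := by
        rw [abs_of_nonneg hρ.le]
        have hle : (2 * Real.pi)⁻¹ * (∫ θ : ℝ in (0)..2 * Real.pi,
            ‖h (circleMap c ρ' θ)‖) ≤ M := by
          rw [inv_mul_le_iff₀ Real.two_pi_pos]
          linarith [hint]
        gcongr
    _ = n.factorial * M * (ρ' : ℝ)⁻¹ ^ n := by ring

/-- The full exact variation formula for the entries of the period matrix under
Schiffer variation (Lemma 3.1 of the paper):
(1/(2πi)) ∮_{|z|=r} (∑_{n≥1} ε^n/(n! z^n) f^{(n-1)}(z)) g(z) dz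
  = ∑_{n≥1} ε^n/(n!(n-1)!) ∑_{m+s=n-1} C(n-1,m) f^{(n-1+m)}(0) g^{(s)}(0),
with both series convergent.  The index is shifted: the `n`-th term (n : ℕ)
corresponds to the paper's index n+1. -/
theorem schiffer_variation_formula (R r : ℝ) (f g : ℂ → ℂ) (ε : ℂ)
    (hR : 0 < R)
    (hf : ∀ z ∈ closedBall (0 : ℂ) R, AnalyticAt ℂ f z)
    (hg : ∀ z ∈ closedBall (0 : ℂ) R, AnalyticAt ℂ g z)
    (hr : 0 < r) (hrR : r < R) (hε : ‖ε‖ < r * (R - r)) :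
    (∀ z ∈ sphere (0 : ℂ) r,
        Summable fun n : ℕ =>
          ε ^ (n + 1) / (((n + 1).factorial : ℂ) * z ^ (n + 1)) *
            iteratedDeriv n f z) ∧
      Summable (fun n : ℕ =>
        ε ^ (n + 1) / (((n + 1).factorial : ℂ) * (n.factorial : ℂ)) *
          ∑ p ∈ Finset.HasAntidiagonal.antidiagonal n,
            (n.choose p.1 : ℂ) * iteratedDeriv (n + p.1) f 0 *
              iteratedDeriv p.2 g 0) ∧
      (2 * Real.pi * Complex.I)⁻¹ *
          (∮ z in C(0, r),
            (∑' n : ℕ,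
              ε ^ (n + 1) / (((n + 1).factorial : ℂ) * z ^ (n + 1)) *
                iteratedDeriv n f z) * g z) =
        ∑' n : ℕ,
          ε ^ (n + 1) / (((n + 1).factorial : ℂ) * (n.factorial : ℂ)) *
            ∑ p ∈ Finset.HasAntidiagonal.antidiagonal n,
              (n.choose p.1 : ℂ) * iteratedDeriv (n + p.1) f 0 *
                iteratedDeriv p.2 g 0 := by
  have hRr : (0:ℝ) < R - r := by linarith
  have hfA : AnalyticOnNhd ℂ f (closedBall 0 R) := hf
  have hgA : AnalyticOnNhd ℂ g (closedBall 0 R) := hg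
  have hsub : closedBall (0:ℂ) r ⊆ closedBall 0 R := closedBall_subset_closedBall hrR.le
  have hsph : sphere (0:ℂ) r ⊆ closedBall (0:ℂ) R :=
    fun z hz => hsub (sphere_subset_closedBall hz)
  have hif : ∀ n, AnalyticOnNhd ℂ (iteratedDeriv n f) (closedBall 0 R) := fun n => by
    rw [iteratedDeriv_eq_iterate]; exact hfA.iterated_deriv n
  obtain ⟨Mf, hMf⟩ := (isCompact_closedBall (0:ℂ) R).exists_bound_of_continuousOn hfA.continuousOn
  obtain ⟨Mg, hMg⟩ := (isCompact_closedBall (0:ℂ) R).exists_bound_of_continuousOn hgA.continuousOn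
  have hMf0 : 0 ≤ Mf := le_trans (norm_nonneg _) (hMf 0 (mem_closedBall_self hR.le))
  have hMg0 : 0 ≤ Mg := le_trans (norm_nonneg _) (hMg 0 (mem_closedBall_self hR.le))
  -- Cauchy estimate for the derivatives of f on the circle of radius r
  have hder : ∀ (n : ℕ), ∀ z ∈ sphere (0:ℂ) r,
      ‖iteratedDeriv n f z‖ ≤ n.factorial * Mf * (R - r)⁻¹ ^ n := by
    intro n z hz
    have hzn : dist z 0 = r := hz
    have hzsub : closedBall z (R - r) ⊆ closedBall (0:ℂ) R := by
      intro w hw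
      rw [mem_closedBall] at hw ⊢
      calc dist w 0 ≤ dist w z + dist z 0 := dist_triangle _ _ _
        _ ≤ (R - r) + r := by rw [hzn]; linarith [hw]
        _ = R := by ring
    exact SVF_estimate hRr
      (fun w hw => ((hfA w (hzsub hw)).differentiableAt).differentiableWithinAt)
      (fun w hw => hMf w (hzsub (sphere_subset_closedBall hw))) n
  set a : ℝ := ‖ε‖ / (r * (R - r)) with ha_def
  have ha0 : 0 ≤ a := by positivity
  have ha1 : a < 1 := (div_lt_one (by positivity)).2 hε
  have hgeo : Summable (fun n : ℕ => a ^ n) := summable_geometric_of_lt_one ha0 ha1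
  set K : ℝ := ‖ε‖ / r * Mf with hK_def
  have hK0 : 0 ≤ K := by positivity
  -- the pointwise bound on the terms of the integrand series
  have hbound : ∀ (n : ℕ), ∀ z ∈ sphere (0:ℂ) r,
      ‖ε ^ (n+1) / (((n+1).factorial : ℂ) * z ^ (n+1)) * iteratedDeriv n f z‖ ≤ K * a ^ n := by
    intro n z hz
    have hzn : ‖z‖ = r := by simpa using hz
    rw [norm_mul, norm_div, norm_pow, norm_mul, norm_pow, Complex.norm_natCast, hzn]
    calc ‖ε‖^(n+1) / ((n+1).factorial * r^(n+1)) * ‖iteratedDeriv n f z‖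
        ≤ ‖ε‖^(n+1) / ((n+1).factorial * r^(n+1)) * (n.factorial * Mf * (R-r)⁻¹^n) :=
          mul_le_mul_of_nonneg_left (hder n z hz) (by positivity)
      _ = K * a ^ n / (n + 1) := by
          have h5 : (((n+1).factorial : ℕ) : ℝ) = ((n:ℝ)+1) * (n.factorial : ℝ) := by
            rw [Nat.factorial_succ]; push_cast; ring
          have ha_n : a ^ n = ‖ε‖^n * (r⁻¹)^n * ((R - r)⁻¹)^n := by
            rw [ha_def, div_eq_mul_inv, mul_inv, mul_pow, mul_pow]; ring
          rw [h5, ha_n, hK_def]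
          have h1 : (n.factorial : ℝ) ≠ 0 := by positivity
          have h4 : ((n:ℝ) + 1) ≠ 0 := by positivity
          have h6 : r ≠ 0 := hr.ne'
          have h7 : R - r ≠ 0 := hRr.ne'
          field_simp
          linear_combination (-(‖ε‖ ^ (n+1) * Mf * r)) * mul_inv_cancel₀ (pow_ne_zero n h6)
      _ ≤ K * a ^ n := by
          apply div_le_self (by positivity)
          have : (0:ℝ) ≤ (n:ℝ) := Nat.cast_nonneg n
          linarith
  -- Part 1
  have part1 : ∀ z ∈ sphere (0 : ℂ) r,
      Summable fun n : ℕ =>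
        ε ^ (n + 1) / (((n + 1).factorial : ℂ) * z ^ (n + 1)) * iteratedDeriv n f z := by
    intro z hz
    exact Summable.of_norm_bounded (hgeo.mul_left K) (fun n => hbound n z hz)
  -- Leibniz formula at 0
  have hcomp : ∀ (m k : ℕ), iteratedDeriv m (iteratedDeriv k f) = iteratedDeriv (k + m) f := by
    intro m k
    rw [iteratedDeriv_eq_iterate, iteratedDeriv_eq_iterate, iteratedDeriv_eq_iterate,
      Nat.add_comm, Function.iterate_add_apply]
  have hleib : ∀ n : ℕ, iteratedDeriv n (fun z => iteratedDeriv n f z * g z) 0 =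
      ∑ p ∈ Finset.HasAntidiagonal.antidiagonal n,
        (n.choose p.1 : ℂ) * iteratedDeriv (n + p.1) f 0 * iteratedDeriv p.2 g 0 := by
    intro n
    have h0 : (0:ℂ) ∈ ball (0:ℂ) R := mem_ball_self hR
    have := SVF_leibniz (isOpen_ball (x := (0:ℂ)) (ε := R))
      ((hif n).mono ball_subset_closedBall) (hgA.mono ball_subset_closedBall) n 0 h0
    rw [this]
    exact Finset.sum_congr rfl fun p _ => by rw [hcomp]
  -- value of each term's circle integral
  have hterm : ∀ n : ℕ,
      (∮ z in C(0, r),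
        (ε ^ (n+1) / (((n+1).factorial : ℂ) * z ^ (n+1)) * iteratedDeriv n f z) * g z)
      = (2 * Real.pi * Complex.I) *
        (ε ^ (n + 1) / (((n + 1).factorial : ℂ) * (n.factorial : ℂ)) *
          ∑ p ∈ Finset.HasAntidiagonal.antidiagonal n,
            (n.choose p.1 : ℂ) * iteratedDeriv (n + p.1) f 0 * iteratedDeriv p.2 g 0) := by
    intro n
    have hd : DifferentiableOn ℂ (fun z => iteratedDeriv n f z * g z) (closedBall (0:ℂ) r) :=
      fun w hw => (((hif n w (hsub hw)).mul (hgA w (hsub hw))).differentiableAt).differentiableWithinAt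
    have hEq : Set.EqOn
        (fun z => (ε ^ (n+1) / (((n+1).factorial : ℂ) * z ^ (n+1)) * iteratedDeriv n f z) * g z)
        (fun z => (ε ^ (n+1) / ((n+1).factorial : ℂ)) •
          (z⁻¹ ^ n • z⁻¹ • (iteratedDeriv n f z * g z))) (sphere (0:ℂ) r) := by
      intro z hz
      have hzn : ‖z‖ = r := by simpa using hz
      have hz0 : z ≠ 0 := by
        intro h; rw [h, norm_zero] at hzn; exact hr.ne hzn
      have hfac : (((n+1).factorial : ℕ) : ℂ) ≠ 0 := by
        exact_mod_cast (n+1).factorial_ne_zero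
      simp only [smul_eq_mul]
      field_simp
      linear_combination (-(ε ^ (n+1) * iteratedDeriv n f z * g z * z)) * mul_inv_cancel₀ (pow_ne_zero n hz0)
    rw [circleIntegral.integral_congr hr.le hEq, circleIntegral.integral_smul,
      SVF_cauchy _ hr hd n, hleib n]
    rw [smul_eq_mul]
    ring
  -- bound on the circle integrals
  have hintbound : ∀ n : ℕ,
      ‖∮ z in C(0, r),
        (ε ^ (n+1) / (((n+1).factorial : ℂ) * z ^ (n+1)) * iteratedDeriv n f z) * g z‖
      ≤ 2 * Real.pi * r * (K * Mg) * a ^ n := by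
    intro n
    have := circleIntegral.norm_integral_le_of_norm_le_const (c := (0:ℂ)) (R := r)
      (C := K * a ^ n * Mg) hr.le (f := fun z =>
        (ε ^ (n+1) / (((n+1).factorial : ℂ) * z ^ (n+1)) * iteratedDeriv n f z) * g z) ?_
    · calc ‖_‖ ≤ 2 * Real.pi * r * (K * a ^ n * Mg) := this
        _ = 2 * Real.pi * r * (K * Mg) * a ^ n := by ring
    · intro z hz
      rw [norm_mul]
      exact mul_le_mul (hbound n z hz) (hMg z (hsph hz)) (norm_nonneg _) (by positivity)
  -- summability of the integrals
  have hsumI : Summable (fun n : ℕ => ∮ z in C(0, r),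
      (ε ^ (n+1) / (((n+1).factorial : ℂ) * z ^ (n+1)) * iteratedDeriv n f z) * g z) :=
    Summable.of_norm_bounded (hgeo.mul_left (2 * Real.pi * r * (K * Mg))) hintbound
  -- Part 2
  have part2 : Summable (fun n : ℕ =>
      ε ^ (n + 1) / (((n + 1).factorial : ℂ) * (n.factorial : ℂ)) *
        ∑ p ∈ Finset.HasAntidiagonal.antidiagonal n,
          (n.choose p.1 : ℂ) * iteratedDeriv (n + p.1) f 0 * iteratedDeriv p.2 g 0) := by
    have h1 := hsumI.mul_left (2 * Real.pi * Complex.I)⁻¹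
    refine h1.congr fun n => ?_
    rw [hterm n, ← mul_assoc, inv_mul_cancel₀ Complex.two_pi_I_ne_zero, one_mul]
  refine ⟨part1, part2, ?_⟩
  -- Part 3: exchange sum and integral
  have hswap : (∮ z in C(0, r),
      (∑' n : ℕ, ε ^ (n + 1) / (((n + 1).factorial : ℂ) * z ^ (n + 1)) * iteratedDeriv n f z) * g z)
      = ∑' n : ℕ, ∮ z in C(0, r),
        (ε ^ (n+1) / (((n+1).factorial : ℂ) * z ^ (n+1)) * iteratedDeriv n f z) * g z := by
    have hγ : ∀ θ : ℝ, circleMap 0 r θ ∈ sphere (0:ℂ) r := circleMap_mem_sphere 0 hr.le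
    have hγ0 : ∀ θ : ℝ, circleMap 0 r θ ≠ 0 := by
      intro θ h
      have := hγ θ
      rw [h] at this
      simp [mem_sphere_iff_norm] at this
      exact hr.ne this
    -- continuity of each term
    have hcontF : ∀ n : ℕ, Continuous (fun θ : ℝ => deriv (circleMap 0 r) θ •
        ((ε ^ (n+1) / (((n+1).factorial : ℂ) * (circleMap 0 r θ) ^ (n+1)) *
          iteratedDeriv n f (circleMap 0 r θ)) * g (circleMap 0 r θ))) := by
      intro n
      have hc1 : Continuous (fun θ : ℝ => deriv (circleMap 0 r) θ) := by
        simp only [deriv_circleMap]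
        exact (continuous_circleMap 0 r).mul continuous_const
      have hc2 : Continuous (fun θ : ℝ => iteratedDeriv n f (circleMap 0 r θ)) :=
        ((hif n).continuousOn).comp_continuous (continuous_circleMap 0 r)
          (fun θ => hsph (hγ θ))
      have hc3 : Continuous (fun θ : ℝ => g (circleMap 0 r θ)) :=
        (hgA.continuousOn).comp_continuous (continuous_circleMap 0 r)
          (fun θ => hsph (hγ θ))
      have hc4 : Continuous (fun θ : ℝ =>
          ε ^ (n+1) / (((n+1).factorial : ℂ) * (circleMap 0 r θ) ^ (n+1))) := by
        apply Continuous.div continuous_const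
        · exact continuous_const.mul ((continuous_circleMap 0 r).pow (n+1))
        · intro θ
          apply mul_ne_zero
          · exact_mod_cast (n+1).factorial_ne_zero
          · exact pow_ne_zero _ (hγ0 θ)
      exact (hc1.smul (((hc4.mul hc2)).mul hc3))
    have hmeas : ∀ n : ℕ, MeasureTheory.AEStronglyMeasurable (fun θ : ℝ =>
        deriv (circleMap 0 r) θ •
        ((ε ^ (n+1) / (((n+1).factorial : ℂ) * (circleMap 0 r θ) ^ (n+1)) *
          iteratedDeriv n f (circleMap 0 r θ)) * g (circleMap 0 r θ)))
        (MeasureTheory.volume.restrict (Set.Ioc 0 (2 * Real.pi))) :=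
      fun n => (hcontF n).aestronglyMeasurable
    have hΦb : ∀ (n : ℕ) (θ : ℝ), ‖deriv (circleMap 0 r) θ •
        ((ε ^ (n+1) / (((n+1).factorial : ℂ) * (circleMap 0 r θ) ^ (n+1)) *
          iteratedDeriv n f (circleMap 0 r θ)) * g (circleMap 0 r θ))‖
        ≤ r * (K * Mg) * a ^ n := by
      intro n θ
      rw [norm_smul, deriv_circleMap, norm_mul, norm_mul]
      have h1 : ‖circleMap 0 r θ‖ = r := by
        have := hγ θ; simpa using this
      rw [h1]
      simp only [Complex.norm_I, mul_one]
      calc r * (‖ε ^ (n+1) / (((n+1).factorial : ℂ) * (circleMap 0 r θ) ^ (n+1)) *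
            iteratedDeriv n f (circleMap 0 r θ)‖ * ‖g (circleMap 0 r θ)‖)
          ≤ r * ((K * a ^ n) * Mg) :=
            mul_le_mul_of_nonneg_left (mul_le_mul (hbound n _ (hγ θ))
              (hMg _ (hsph (hγ θ))) (norm_nonneg _) (by positivity)) hr.le
        _ = r * (K * Mg) * a ^ n := by ring
    have hlint : (∑' n : ℕ, ∫⁻ θ : ℝ, ‖deriv (circleMap 0 r) θ •
        ((ε ^ (n+1) / (((n+1).factorial : ℂ) * (circleMap 0 r θ) ^ (n+1)) *
          iteratedDeriv n f (circleMap 0 r θ)) * g (circleMap 0 r θ))‖₊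
        ∂(MeasureTheory.volume.restrict (Set.Ioc 0 (2 * Real.pi)))) ≠ ⊤ := by
      have hb : ∀ n : ℕ, (∫⁻ θ : ℝ, ‖deriv (circleMap 0 r) θ •
          ((ε ^ (n+1) / (((n+1).factorial : ℂ) * (circleMap 0 r θ) ^ (n+1)) *
            iteratedDeriv n f (circleMap 0 r θ)) * g (circleMap 0 r θ))‖₊
          ∂(MeasureTheory.volume.restrict (Set.Ioc 0 (2 * Real.pi))))
          ≤ ENNReal.ofReal (r * (K * Mg) * a ^ n) * ENNReal.ofReal (2 * Real.pi) := by
        intro n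
        calc (∫⁻ θ : ℝ, ‖deriv (circleMap 0 r) θ •
            ((ε ^ (n+1) / (((n+1).factorial : ℂ) * (circleMap 0 r θ) ^ (n+1)) *
              iteratedDeriv n f (circleMap 0 r θ)) * g (circleMap 0 r θ))‖₊
            ∂(MeasureTheory.volume.restrict (Set.Ioc 0 (2 * Real.pi))))
            ≤ ∫⁻ _θ : ℝ, ENNReal.ofReal (r * (K * Mg) * a ^ n)
              ∂(MeasureTheory.volume.restrict (Set.Ioc 0 (2 * Real.pi))) := by
              exact MeasureTheory.lintegral_mono fun θ => by
                simpa only [ofReal_norm, enorm_eq_nnnorm] using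
                  ENNReal.ofReal_le_ofReal (hΦb n θ)
          _ = ENNReal.ofReal (r * (K * Mg) * a ^ n) * ENNReal.ofReal (2 * Real.pi) := by
              rw [MeasureTheory.lintegral_const, MeasureTheory.Measure.restrict_apply_univ,
                Real.volume_Ioc]
              norm_num
      refine ne_top_of_le_ne_top ?_ (ENNReal.tsum_le_tsum hb)
      rw [ENNReal.tsum_mul_right,
        ← ENNReal.ofReal_tsum_of_nonneg (fun n => by positivity)
          ((hgeo.mul_left (r * (K * Mg))))]
      exact ENNReal.mul_ne_top ENNReal.ofReal_ne_top ENNReal.ofReal_ne_top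
    calc (∮ z in C(0, r), (∑' n : ℕ,
          ε ^ (n + 1) / (((n + 1).factorial : ℂ) * z ^ (n + 1)) * iteratedDeriv n f z) * g z)
        = ∫ θ in Set.Ioc (0:ℝ) (2 * Real.pi), ∑' n : ℕ, deriv (circleMap 0 r) θ •
            ((ε ^ (n+1) / (((n+1).factorial : ℂ) * (circleMap 0 r θ) ^ (n+1)) *
              iteratedDeriv n f (circleMap 0 r θ)) * g (circleMap 0 r θ)) := by
          rw [circleIntegral, intervalIntegral.integral_of_le Real.two_pi_pos.le]
          congr 1
          funext θ
          rw [smul_eq_mul, ← tsum_mul_right, ← tsum_mul_left]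
          exact tsum_congr fun n => by rw [smul_eq_mul]
      _ = ∑' n : ℕ, ∫ θ in Set.Ioc (0:ℝ) (2 * Real.pi), deriv (circleMap 0 r) θ •
            ((ε ^ (n+1) / (((n+1).factorial : ℂ) * (circleMap 0 r θ) ^ (n+1)) *
              iteratedDeriv n f (circleMap 0 r θ)) * g (circleMap 0 r θ)) :=
          MeasureTheory.integral_tsum hmeas hlint
      _ = ∑' n : ℕ, ∮ z in C(0, r),
            (ε ^ (n+1) / (((n+1).factorial : ℂ) * z ^ (n+1)) * iteratedDeriv n f z) * g z := by
          refine tsum_congr fun n => ?_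
          rw [circleIntegral, intervalIntegral.integral_of_le Real.two_pi_pos.le]
  rw [hswap]
  rw [tsum_congr hterm, tsum_mul_left, ← mul_assoc,
    inv_mul_cancel₀ Complex.two_pi_I_ne_zero, one_mul]
end

section
/- Let R > 0 and let f and g be complex-valued functions analytic on the closed ball of radius R centered at 0 in ℂ. Then there exists δ > 0 (one may take δ = R²/8) such that for every ε ∈ ℂ with |ε| < δ, the series ∑_{n=1}^∞ (ε^n / (n! (n-1)!)) ∑_{m + s = n - 1} C(n-1, m) f^{(n-1+m)}(0) g^{(s)}(0) converges absolutely. (This establishes that the variational series for a period matrix entry under Schiffer variation, appearing in Lemma 3.1 of the paper, defines a convergent power series in the Schiffer parameter ε.) -/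
open Metric

lemma choose_le_two_pow' (k m : ℕ) : k.choose m ≤ 2 ^ k := by
  rcases le_or_gt m k with h | h
  · calc k.choose m ≤ ∑ i ∈ Finset.range (k + 1), k.choose i :=
        Finset.single_le_sum (fun i _ => Nat.zero_le _)
          (Finset.mem_range.mpr (Nat.lt_succ_of_le h))
    _ = 2 ^ k := Nat.sum_range_choose k
  · simp [Nat.choose_eq_zero_of_lt h]

lemma key_nat_ineq {n m s : ℕ} (h : m + s = n) :
    n.choose m * (n + m).factorial * s.factorial ≤ 4 ^ n * (n.factorial * n.factorial) := by
  have hm : m ≤ n := by omega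
  have e1 : n.choose m * m.factorial * s.factorial = n.factorial := by
    have := Nat.choose_mul_factorial_mul_factorial hm
    rwa [show n - m = s by omega] at this
  have e2 : (n + m).choose m * m.factorial * n.factorial = (n + m).factorial := by
    have := Nat.choose_mul_factorial_mul_factorial (show m ≤ n + m by omega)
    rwa [Nat.add_sub_cancel] at this
  have key : n.choose m * (n + m).factorial * s.factorial
      = (n + m).choose m * (n.factorial * n.factorial) := by
    have hmf : 0 < m.factorial := m.factorial_pos
    apply Nat.eq_of_mul_eq_mul_right hmf
    calc n.choose m * (n + m).factorial * s.factorial * m.factorial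
        = (n.choose m * m.factorial * s.factorial) * (n + m).factorial := by ring
      _ = n.factorial * ((n + m).choose m * m.factorial * n.factorial) := by rw [e1, e2]
      _ = (n + m).choose m * (n.factorial * n.factorial) * m.factorial := by ring
  rw [key]
  have h2 : (n + m).choose m ≤ 4 ^ n := by
    calc (n + m).choose m ≤ 2 ^ (n + m) := choose_le_two_pow' _ _
      _ ≤ 2 ^ (2 * n) := Nat.pow_le_pow_right (by norm_num) (by omega)
      _ = 4 ^ n := by rw [pow_mul]; norm_num
  exact Nat.mul_le_mul_right _ h2

lemma cauchy_deriv_bound {R : ℝ} (hR : 0 < R) {f : ℂ → ℂ}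
    (hf : ∀ z ∈ closedBall (0 : ℂ) R, AnalyticAt ℂ f z) :
    ∃ C > 0, ∀ n : ℕ, ‖iteratedDeriv n f 0‖ ≤ C * n.factorial * R⁻¹ ^ n := by
  obtain ⟨δ, δpos, hδ⟩ := (isCompact_closedBall (0 : ℂ) R).exists_thickening_subset_open
    (isOpen_analyticAt ℂ f) hf
  set r : NNReal := ⟨R + δ / 2, by positivity⟩ with hr
  have hrR : R < (r : ℝ) := by show R < R + δ / 2; linarith
  have hsub : closedBall (0 : ℂ) (r : ℝ) ⊆ {x | AnalyticAt ℂ f x} := by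
    refine subset_trans ?_ hδ
    rw [thickening_closedBall δpos hR.le]
    intro z hz
    simp only [mem_closedBall, Complex.dist_eq, sub_zero] at hz
    simp only [mem_ball, Complex.dist_eq, sub_zero]
    have : (r : ℝ) = R + δ / 2 := rfl
    rw [this] at hz
    linarith
  have hdiff : DifferentiableOn ℂ f (closedBall (0 : ℂ) (r : ℝ)) :=
    fun z hz => ((hsub hz).differentiableAt).differentiableWithinAt
  have hrpos : (0 : NNReal) < r := by
    rw [← NNReal.coe_lt_coe]; push_cast; linarith
  have hp := hdiff.hasFPowerSeriesOnBall hrpos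
  have hrad : ((R.toNNReal : NNReal) : ENNReal) < (cauchyPowerSeries f 0 r).radius := by
    refine lt_of_lt_of_le ?_ hp.r_le
    rw [ENNReal.coe_lt_coe, ← NNReal.coe_lt_coe, Real.coe_toNNReal _ hR.le]
    exact hrR
  obtain ⟨C, hC, hb⟩ := (cauchyPowerSeries f 0 r).norm_mul_pow_le_of_lt_radius hrad
  refine ⟨C, hC, fun n => ?_⟩
  have h1 : iteratedDeriv n f 0 = iteratedFDeriv ℂ n f 0 (fun _ => 1) :=
    iteratedDeriv_eq_iteratedFDeriv
  have h2 := hp.factorial_smul (1 : ℂ) n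
  rw [h1, ← h2]
  rw [← Nat.cast_smul_eq_nsmul ℝ, norm_smul]
  have h3 : ‖cauchyPowerSeries f 0 r n fun _ => (1 : ℂ)‖ ≤ ‖cauchyPowerSeries f 0 r n‖ := by
    calc ‖cauchyPowerSeries f 0 r n fun _ => (1 : ℂ)‖
        ≤ ‖cauchyPowerSeries f 0 r n‖ * ∏ _i : Fin n, ‖(1 : ℂ)‖ :=
          (cauchyPowerSeries f 0 r n).le_opNorm _
      _ = ‖cauchyPowerSeries f 0 r n‖ := by simp
  have h4 : ‖cauchyPowerSeries f 0 r n‖ ≤ C * R⁻¹ ^ n := by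
    have := hb n
    rw [Real.coe_toNNReal _ hR.le] at this
    rw [← le_div_iff₀ (pow_pos hR n)] at this
    simpa [div_eq_mul_inv, inv_pow] using this
  calc ‖((n.factorial : ℝ))‖ * ‖cauchyPowerSeries f 0 r n fun _ => (1 : ℂ)‖
      ≤ (n.factorial : ℝ) * (C * R⁻¹ ^ n) := by
        refine mul_le_mul ?_ (h3.trans h4) (norm_nonneg _) (by positivity)
        simp
    _ = C * n.factorial * R⁻¹ ^ n := by ring

/-- The variational series for a period matrix entry under Schiffer variation
(Lemma 3.1 of the paper) converges absolutely for |ε| < δ, where one may take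
δ = R²/8.  The index is shifted: the `n`-th term (n : ℕ) corresponds to the
paper's index n+1. -/
theorem schiffer_series_absolute_convergence (R : ℝ) (f g : ℂ → ℂ)
    (hR : 0 < R)
    (hf : ∀ z ∈ closedBall (0 : ℂ) R, AnalyticAt ℂ f z)
    (hg : ∀ z ∈ closedBall (0 : ℂ) R, AnalyticAt ℂ g z) :
    ∃ δ : ℝ, 0 < δ ∧ δ = R ^ 2 / 8 ∧
      ∀ ε : ℂ, ‖ε‖ < δ →
        Summable fun n : ℕ =>
          ‖ε ^ (n + 1) / (((n + 1).factorial : ℂ) * (n.factorial : ℂ)) *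
              ∑ p ∈ Finset.HasAntidiagonal.antidiagonal n,
                (n.choose p.1 : ℂ) * iteratedDeriv (n + p.1) f 0 *
                  iteratedDeriv p.2 g 0‖ := by
  refine ⟨R ^ 2 / 8, by positivity, rfl, fun ε hε => ?_⟩
  obtain ⟨Cf, hCf, hfb⟩ := cauchy_deriv_bound hR hf
  obtain ⟨Cg, hCg, hgb⟩ := cauchy_deriv_bound hR hg
  set q : ℝ := 4 * ‖ε‖ / R ^ 2 with hqdef
  have hq0 : 0 ≤ q := by positivity
  have hq1 : q < 1 := by
    rw [hqdef, div_lt_one (by positivity)]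
    nlinarith [norm_nonneg ε]
  have hsum : Summable fun n : ℕ => Cf * Cg * ‖ε‖ * q ^ n :=
    (summable_geometric_of_lt_one hq0 hq1).mul_left _
  refine Summable.of_nonneg_of_le (fun n => norm_nonneg _) (fun n => ?_) hsum
  -- bound on the inner sum
  have hS : ‖∑ p ∈ Finset.HasAntidiagonal.antidiagonal n,
      (n.choose p.1 : ℂ) * iteratedDeriv (n + p.1) f 0 * iteratedDeriv p.2 g 0‖
      ≤ (n + 1) * (Cf * Cg * ((4 ^ n * ((n.factorial : ℝ) * n.factorial)) * R⁻¹ ^ (2 * n))) := by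
    calc ‖∑ p ∈ Finset.HasAntidiagonal.antidiagonal n,
        (n.choose p.1 : ℂ) * iteratedDeriv (n + p.1) f 0 * iteratedDeriv p.2 g 0‖
        ≤ ∑ p ∈ Finset.HasAntidiagonal.antidiagonal n,
          ‖(n.choose p.1 : ℂ) * iteratedDeriv (n + p.1) f 0 * iteratedDeriv p.2 g 0‖ :=
          norm_sum_le _ _
      _ ≤ ∑ _p ∈ Finset.HasAntidiagonal.antidiagonal n,
          Cf * Cg * ((4 ^ n * ((n.factorial : ℝ) * n.factorial)) * R⁻¹ ^ (2 * n)) := by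
          refine Finset.sum_le_sum fun p hp => ?_
          obtain ⟨m, s⟩ := p
          have hms : m + s = n := Finset.HasAntidiagonal.mem_antidiagonal.mp hp
          simp only
          rw [norm_mul, norm_mul, Complex.norm_natCast]
          calc (n.choose m : ℝ) * ‖iteratedDeriv (n + m) f 0‖ * ‖iteratedDeriv s g 0‖
              ≤ (n.choose m : ℝ) * (Cf * (n + m).factorial * R⁻¹ ^ (n + m))
                * (Cg * s.factorial * R⁻¹ ^ s) := by
                have h1 := hfb (n + m)
                have h2 := hgb s
                have hnn : (0:ℝ) ≤ (n.choose m : ℝ) := by positivity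
                exact mul_le_mul (mul_le_mul_of_nonneg_left h1 hnn) h2
                  (norm_nonneg _) (by positivity)
            _ = Cf * Cg * (((n.choose m * (n + m).factorial * s.factorial : ℕ) : ℝ)
                * R⁻¹ ^ (2 * n)) := by
                push_cast
                rw [show 2 * n = (n + m) + s by omega, pow_add]
                ring
            _ ≤ Cf * Cg * ((((4 ^ n * (n.factorial * n.factorial) : ℕ)) : ℝ)
                * R⁻¹ ^ (2 * n)) := by
                have hk : ((n.choose m * (n + m).factorial * s.factorial : ℕ) : ℝ)
                    ≤ ((4 ^ n * (n.factorial * n.factorial) : ℕ) : ℝ) :=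
                  Nat.cast_le.mpr (key_nat_ineq hms)
                exact mul_le_mul_of_nonneg_left
                  (mul_le_mul_of_nonneg_right hk (by positivity)) (by positivity)
            _ = Cf * Cg * ((4 ^ n * ((n.factorial : ℝ) * n.factorial)) * R⁻¹ ^ (2 * n)) := by
                push_cast; ring
      _ = (n + 1) * (Cf * Cg * ((4 ^ n * ((n.factorial : ℝ) * n.factorial)) * R⁻¹ ^ (2 * n))) := by
          rw [Finset.sum_const, Finset.Nat.card_antidiagonal]
          ring
  rw [norm_mul, norm_div, norm_pow, norm_mul, Complex.norm_natCast, Complex.norm_natCast]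
  have hfac : (0:ℝ) < ((n + 1).factorial : ℝ) * (n.factorial : ℝ) := by positivity
  calc ‖ε‖ ^ (n + 1) / (((n + 1).factorial : ℝ) * (n.factorial : ℝ)) *
      ‖∑ p ∈ Finset.HasAntidiagonal.antidiagonal n,
        (n.choose p.1 : ℂ) * iteratedDeriv (n + p.1) f 0 * iteratedDeriv p.2 g 0‖
      ≤ ‖ε‖ ^ (n + 1) / (((n + 1).factorial : ℝ) * (n.factorial : ℝ)) *
        ((n + 1) * (Cf * Cg * ((4 ^ n * ((n.factorial : ℝ) * n.factorial)) * R⁻¹ ^ (2 * n)))) := by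
        gcongr
    _ = Cf * Cg * ‖ε‖ * q ^ n := by
        rw [hqdef]
        have hfs : (((n + 1).factorial : ℕ) : ℝ) = (n + 1) * (n.factorial : ℝ) := by
          push_cast [Nat.factorial_succ]; ring
        rw [hfs]
        have hinv : R⁻¹ ^ (2 * n) = ((R ^ 2) ^ n)⁻¹ := by
          rw [inv_pow, ← pow_mul]
        rw [hinv, div_pow, mul_pow, pow_succ]
        have hfn : (n.factorial : ℝ) ≠ 0 := by positivity
        have hR2 : ((R ^ 2 : ℝ)) ^ n ≠ 0 := by positivity
        field_simp
end
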